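/- arXiv:2603.03843 — 5 statements merged into one kernel-verified Lean document; each statement's English description precedes it below -/
import Mathlib

section
/- Let λ > 0, let t, p ∈ ℕ with p ≥ 1, and let x_1, …, x_t ∈ ℝ^p satisfy ‖x_τ‖₂ ≤ L for all τ ∈ {1,…,t}, where L > 0. Define V_t := λ I_p + Σ_{τ=1}^t x_τ x_τᵀ. Then log( det(V_t) / det(λ I_p) ) ≤ p · log( 1 + t L² / (λ p) ). -/
open Matrix Finset

-- auxiliary: trace equals sum of eigenvalues for hermitian real matrix
lemma trace_eq_sum_eigs {p : ℕ} {A : Matrix (Fin p) (Fin p) ℝ} (hA : A.IsHermitian) :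
    A.trace = ∑ i, hA.eigenvalues i := by
  simpa using hA.trace_eq_sum_eigenvalues

lemma psd_outer {p : ℕ} (v : Fin p → ℝ) : (vecMulVec v v).PosSemidef := by
  rw [posSemidef_iff_dotProduct_mulVec]
  constructor
  · ext i j
    simp [conjTranspose_apply, vecMulVec_apply, mul_comm]
  · intro y
    have h1 : star y ⬝ᵥ (vecMulVec v v *ᵥ y) = (v ⬝ᵥ y) * (v ⬝ᵥ y) := by
      simp only [star_trivial, dotProduct, mulVec, vecMulVec_apply, Finset.mul_sum,
        Finset.sum_mul]
      rw [Finset.sum_comm]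
      congr 1; ext i; congr 1; ext j; ring
    rw [h1]
    exact mul_self_nonneg _

/-- determinant bound, Lemma 1 part 2.
If `‖x τ‖₂ ≤ L` for all `τ`, and `V_t = λ I_p + ∑ x_τ x_τᵀ`, then
`log (det V_t / det (λ I_p)) ≤ p log (1 + t L² / (λ p))`. -/
theorem stmt1 {p : ℕ} (hp : 1 ≤ p) (t : ℕ) (lam L : ℝ) (hlam : 0 < lam) (hL : 0 < L)
    (x : Fin t → Fin p → ℝ) (hx : ∀ τ, Real.sqrt (x τ ⬝ᵥ x τ) ≤ L)
    (V : Matrix (Fin p) (Fin p) ℝ)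
    (hV : V = lam • (1 : Matrix (Fin p) (Fin p) ℝ) + ∑ τ, vecMulVec (x τ) (x τ)) :
    Real.log (V.det / (lam • (1 : Matrix (Fin p) (Fin p) ℝ)).det)
      ≤ p * Real.log (1 + t * L ^ 2 / (lam * p)) := by
  classical
  have hp0 : (0:ℝ) < p := by exact_mod_cast hp
  -- positive definiteness
  have hPD : V.PosDef := by
    rw [hV]
    refine Matrix.PosDef.add_posSemidef ?_ ?_
    · rw [smul_one_eq_diagonal]
      exact Matrix.posDef_diagonal_iff.mpr fun _ => hlam
    · refine Finset.sum_induction _ _ (fun a b ha hb => ha.add hb) Matrix.PosSemidef.zero ?_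
      exact fun τ _ => psd_outer (x τ)
  have hH : V.IsHermitian := hPD.isHermitian
  set μ : Fin p → ℝ := hH.eigenvalues with hμ
  have hμpos : ∀ i, 0 < μ i := hPD.eigenvalues_pos
  -- trace bound
  have htr : V.trace ≤ lam * p + t * L ^ 2 := by
    rw [hV, Matrix.trace_add, smul_one_eq_diagonal, trace_diagonal, Matrix.trace_sum]
    have hbd : ∀ τ, (vecMulVec (x τ) (x τ)).trace ≤ L ^ 2 := by
      intro τ
      have h0 : (0:ℝ) ≤ x τ ⬝ᵥ x τ := by
        simpa [dotProduct] using Finset.sum_nonneg fun i _ => mul_self_nonneg (x τ i)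
      have : x τ ⬝ᵥ x τ ≤ L ^ 2 := by
        have := hx τ
        nlinarith [Real.sq_sqrt h0, Real.sqrt_nonneg (x τ ⬝ᵥ x τ)]
      simpa [Matrix.trace, Matrix.diag, vecMulVec_apply, dotProduct, pow_two] using this
    calc (∑ _i : Fin p, lam) + ∑ τ, (vecMulVec (x τ) (x τ)).trace
        ≤ lam * p + ∑ τ : Fin t, L ^ 2 := by
          gcongr
          · simp [mul_comm]
          · exact hbd _
      _ = lam * p + t * L ^ 2 := by simp [mul_comm]
  have htrsum : ∑ i, μ i = V.trace := (trace_eq_sum_eigs hH).symm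
  -- determinant values
  have hdetlam : (lam • (1 : Matrix (Fin p) (Fin p) ℝ)).det = lam ^ p := by
    simp [Matrix.det_smul]
  have hdetV : V.det = ∏ i, μ i := by
    simpa using hH.det_eq_prod_eigenvalues
  -- rewrite LHS as sum of logs
  have hlhs : Real.log (V.det / (lam • (1 : Matrix (Fin p) (Fin p) ℝ)).det)
      = ∑ i, Real.log (μ i / lam) := by
    rw [hdetlam, hdetV]
    rw [show lam ^ p = ∏ _i : Fin p, lam by simp, ← Finset.prod_div_distrib]
    exact Real.log_prod (fun i _ => ne_of_gt (div_pos (hμpos i) hlam))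
  rw [hlhs]
  -- Jensen
  have hcc : ConcaveOn ℝ (Set.Ioi 0) Real.log := strictConcaveOn_log_Ioi.concaveOn
  have hjen := hcc.le_map_sum (t := Finset.univ) (w := fun _ : Fin p => (p:ℝ)⁻¹)
    (p := fun i => μ i / lam) (fun i _ => by positivity)
    (by simp [Finset.card_univ]; field_simp)
    (fun i _ => Set.mem_Ioi.mpr (div_pos (hμpos i) hlam))
  have hsum_eq : ∑ i : Fin p, (p:ℝ)⁻¹ • (μ i / lam) = V.trace / (lam * p) := by
    rw [← Finset.smul_sum, show ∑ i : Fin p, μ i / lam = V.trace / lam by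
      rw [← htrsum, Finset.sum_div]]
    rw [smul_eq_mul, inv_mul_eq_div, div_div]
  have harg_pos : (0:ℝ) < V.trace / (lam * p) := by
    rw [← htrsum]
    have : Nonempty (Fin p) := Fin.pos_iff_nonempty.mp hp
    exact div_pos (Finset.sum_pos (fun i _ => hμpos i) Finset.univ_nonempty) (by positivity)
  have hlog_le : Real.log (V.trace / (lam * p)) ≤ Real.log (1 + t * L ^ 2 / (lam * p)) := by
    apply Real.log_le_log harg_pos
    rw [div_le_iff₀ (by positivity)]
    calc V.trace ≤ lam * p + t * L ^ 2 := htr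
      _ = (1 + t * L ^ 2 / (lam * p)) * (lam * p) := by field_simp
  calc ∑ i, Real.log (μ i / lam)
      = p * ∑ i : Fin p, (p:ℝ)⁻¹ • Real.log (μ i / lam) := by
        rw [← Finset.smul_sum]; simp only [smul_eq_mul]; field_simp
    _ ≤ p * Real.log (∑ i : Fin p, (p:ℝ)⁻¹ • (μ i / lam)) := by
        exact mul_le_mul_of_nonneg_left hjen (le_of_lt hp0)
    _ = p * Real.log (V.trace / (lam * p)) := by rw [hsum_eq]
    _ ≤ p * Real.log (1 + t * L ^ 2 / (lam * p)) := by
        exact mul_le_mul_of_nonneg_left hlog_le (le_of_lt hp0)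
end

section
/- Let λ > 0, let x_1, …, x_n ∈ ℝ^k, ε_1, …, ε_n ∈ ℝ, and δ ∈ ℝ^k, and set r_τ := x_τᵀ δ + ε_τ for τ ∈ {1,…,n}. Define V := λ I_k + Σ_{τ=1}^n x_τ x_τᵀ and the ridge estimator δ̂ := V^{-1} Σ_{τ=1}^n x_τ r_τ. Then ‖δ̂ − δ‖_V ≤ ‖ Σ_{τ=1}^n x_τ ε_τ ‖_{V^{-1}} + √λ · ‖δ‖₂. -/
set_option maxHeartbeats 800000

open Matrix

/-- The weighted (semi-)norm `‖x‖_A := √(xᵀ A x)`. -/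
noncomputable def wnorm {k : ℕ} (A : Matrix (Fin k) (Fin k) ℝ) (x : Fin k → ℝ) : ℝ :=
  Real.sqrt (x ⬝ᵥ A.mulVec x)

lemma aux_dot_self_nonneg {k : ℕ} (v : Fin k → ℝ) : 0 ≤ v ⬝ᵥ v :=
  Finset.sum_nonneg fun i _ => mul_self_nonneg (v i)

lemma aux_sqrt_dot_triangle {k : ℕ} (u v : Fin k → ℝ) :
    Real.sqrt ((u + v) ⬝ᵥ (u + v)) ≤ Real.sqrt (u ⬝ᵥ u) + Real.sqrt (v ⬝ᵥ v) := by
  have key : ∀ w : Fin k → ℝ,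
      Real.sqrt (w ⬝ᵥ w) = ‖((WithLp.equiv 2 (Fin k → ℝ)).symm w : EuclideanSpace ℝ (Fin k))‖ := by
    intro w
    rw [EuclideanSpace.norm_eq]
    congr 1
    simp [dotProduct, sq, Real.norm_eq_abs, abs_mul_abs_self]
  rw [key, key, key]
  exact norm_add_le _ _

lemma aux_sum_mulVec {k n : ℕ} (A : Fin n → Matrix (Fin k) (Fin k) ℝ) (v : Fin k → ℝ) :
    (∑ τ, A τ) *ᵥ v = ∑ τ, A τ *ᵥ v := by
  ext i
  simp [mulVec, dotProduct, Matrix.sum_apply, Finset.sum_mul]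
  rw [Finset.sum_comm]

lemma aux_vecMulVec_mulVec {k : ℕ} (w : Fin k → ℝ) (v : Fin k → ℝ) :
    vecMulVec w w *ᵥ v = (w ⬝ᵥ v) • w := by
  ext i
  simp [mulVec, dotProduct, vecMulVec_apply, Finset.mul_sum, mul_comm, mul_left_comm]

open scoped MatrixOrder in
lemma aux_wnorm_factor {k : ℕ} {A : Matrix (Fin k) (Fin k) ℝ} (hA : A.PosSemidef)
    (y : Fin k → ℝ) : y ⬝ᵥ A *ᵥ y = (CFC.sqrt A *ᵥ y) ⬝ᵥ (CFC.sqrt A *ᵥ y) := by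
  conv_lhs => rw [← CFC.sqrt_mul_sqrt_self A hA.nonneg]
  rw [← mulVec_mulVec, dotProduct_mulVec]
  congr 1
  rw [← vecMul_transpose]
  congr 1
  rw [← conjTranspose_eq_transpose_of_trivial]
  exact (CFC.sqrt_nonneg A).posSemidef.1.symm ▸ rfl

lemma aux_wnorm_triangle {k : ℕ} {A : Matrix (Fin k) (Fin k) ℝ} (hA : A.PosSemidef)
    (u v : Fin k → ℝ) : wnorm A (u + v) ≤ wnorm A u + wnorm A v := by
  unfold wnorm
  rw [aux_wnorm_factor hA u, aux_wnorm_factor hA v, aux_wnorm_factor hA (u + v), mulVec_add]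
  exact aux_sqrt_dot_triangle _ _

/-- deterministic ridge-regression error bound.
With `r_τ = x_τᵀ δ + ε_τ`, `V = λ I_k + ∑ x_τ x_τᵀ` and
`δ̂ = V⁻¹ ∑ x_τ r_τ`, one has `‖δ̂ − δ‖_V ≤ ‖∑ x_τ ε_τ‖_{V⁻¹} + √λ ‖δ‖₂`. -/
theorem stmt6 {k n : ℕ} (lam : ℝ) (hlam : 0 < lam)
    (x : Fin n → Fin k → ℝ) (ε : Fin n → ℝ) (δ : Fin k → ℝ)
    (r : Fin n → ℝ) (hr : ∀ τ, r τ = x τ ⬝ᵥ δ + ε τ)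
    (V : Matrix (Fin k) (Fin k) ℝ)
    (hV : V = lam • (1 : Matrix (Fin k) (Fin k) ℝ) + ∑ τ, vecMulVec (x τ) (x τ))
    (δhat : Fin k → ℝ) (hδhat : δhat = V⁻¹.mulVec (∑ τ, r τ • x τ)) :
    wnorm V (δhat - δ)
      ≤ wnorm V⁻¹ (∑ τ, ε τ • x τ) + Real.sqrt lam * Real.sqrt (δ ⬝ᵥ δ) := by
  set M : Matrix (Fin k) (Fin k) ℝ := ∑ τ, vecMulVec (x τ) (x τ) with hMdef
  set S : Fin k → ℝ := ∑ τ, ε τ • x τ with hSdef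
  -- positive semidefiniteness facts
  have hM : M.PosSemidef := by
    refine Finset.sum_induction (fun τ => vecMulVec (x τ) (x τ)) (fun A => A.PosSemidef)
      (fun a b ha hb => ha.add hb) Matrix.PosSemidef.zero (fun τ _ => ?_)
    refine PosSemidef.of_dotProduct_mulVec_nonneg ?_ (fun y => ?_)
    · ext i j
      simp [conjTranspose, vecMulVec_apply, mul_comm]
    · rw [aux_vecMulVec_mulVec]
      simp only [star_trivial, dotProduct_smul]
      rw [dotProduct_comm]
      exact mul_self_nonneg _
  have hVpd : V.PosDef := by
    rw [hV]
    refine Matrix.PosDef.add_posSemidef (PosDef.of_dotProduct_mulVec_pos ?_ fun y hy => ?_) hM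
    · ext i j
      simp [conjTranspose, Matrix.one_apply, eq_comm]
    · simp only [star_trivial, smul_mulVec, one_mulVec, dotProduct_smul, smul_eq_mul]
      have h1 : 0 < y ⬝ᵥ y :=
        lt_of_le_of_ne (aux_dot_self_nonneg y) fun h => hy (dotProduct_self_eq_zero.mp h.symm)
      positivity
  have hVinv : V⁻¹.PosDef := hVpd.inv
  have hdet : IsUnit V.det := (Matrix.isUnit_iff_isUnit_det V).mp hVpd.isUnit
  have hVV : V * V⁻¹ = 1 := Matrix.mul_nonsing_inv V hdet
  have hVVi : V⁻¹ * V = 1 := Matrix.nonsing_inv_mul V hdet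
  -- algebraic identity for δhat - δ
  have hsum : ∑ τ, r τ • x τ = M *ᵥ δ + S := by
    rw [hMdef, hSdef, aux_sum_mulVec, ← Finset.sum_add_distrib]
    congr 1
    ext τ
    rw [hr τ, aux_vecMulVec_mulVec, add_smul]
  have hMδ : M *ᵥ δ = V *ᵥ δ - lam • δ := by
    rw [hV]
    simp [add_mulVec, smul_mulVec]
  have hδδ : δhat - δ = V⁻¹ *ᵥ S + -(lam • (V⁻¹ *ᵥ δ)) := by
    rw [hδhat, hsum, hMδ, mulVec_add, mulVec_sub, mulVec_mulVec, hVVi, one_mulVec, mulVec_smul]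
    abel
  rw [hδδ]
  have htri := aux_wnorm_triangle hVpd.posSemidef (V⁻¹ *ᵥ S) (-(lam • (V⁻¹ *ᵥ δ)))
  refine le_trans htri (add_le_add ?_ ?_)
  · -- ‖V⁻¹ S‖_V = ‖S‖_{V⁻¹}
    apply le_of_eq
    unfold wnorm
    congr 1
    rw [mulVec_mulVec, hVV, one_mulVec, dotProduct_comm]
  · -- second term
    set t : ℝ := δ ⬝ᵥ V⁻¹ *ᵥ δ with htdef
    have ht0 : 0 ≤ t := by simpa using hVinv.posSemidef.dotProduct_mulVec_nonneg δ
    have hMV : M = V - lam • (1 : Matrix (Fin k) (Fin k) ℝ) := by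
      rw [hV]; abel
    have hVM : (V * M).PosSemidef := by
      have h1 : V * M = lam • M + M * M := by
        rw [hV, add_mul, smul_mul_assoc, one_mul]
      have hsmulM : (lam • M).PosSemidef := by
        refine PosSemidef.of_dotProduct_mulVec_nonneg ?_ (fun y => ?_)
        · show (lam • M)ᴴ = lam • M
          rw [conjTranspose_smul, hM.1.eq, star_trivial]
        · have := hM.dotProduct_mulVec_nonneg y
          simp only [star_trivial, smul_mulVec, dotProduct_smul, smul_eq_mul] at *
          positivity
      have hMM : (M * M).PosSemidef := by
        have h := Matrix.posSemidef_conjTranspose_mul_self M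
        rwa [hM.1.eq] at h
      rw [h1]; exact hsmulM.add hMM
    have h2 : (1 : Matrix (Fin k) (Fin k) ℝ) - lam • V⁻¹ = V⁻¹ᴴ * (V * M) * V⁻¹ := by
      rw [hVinv.1.eq, ← mul_assoc, hVVi, one_mul, hMV, sub_mul, smul_mul_assoc,
        one_mul, hVV]
    have hC : ((1 : Matrix (Fin k) (Fin k) ℝ) - lam • V⁻¹).PosSemidef := by
      rw [h2]; exact hVM.conjTranspose_mul_mul_same V⁻¹
    have hkey : lam * t ≤ δ ⬝ᵥ δ := by
      have h3 := hC.dotProduct_mulVec_nonneg δ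
      simp only [star_trivial, sub_mulVec, one_mulVec, smul_mulVec, dotProduct_sub,
        dotProduct_smul, smul_eq_mul] at h3
      rw [htdef]
      linarith
    have hdot : (-(lam • (V⁻¹ *ᵥ δ))) ⬝ᵥ V *ᵥ (-(lam • (V⁻¹ *ᵥ δ))) = lam * (lam * t) := by
      rw [mulVec_neg, dotProduct_neg, neg_dotProduct, neg_neg, mulVec_smul, dotProduct_smul,
        smul_dotProduct, mulVec_mulVec, hVV, one_mulVec, htdef, smul_eq_mul, smul_eq_mul,
        dotProduct_comm]
    unfold wnorm
    rw [hdot, ← Real.sqrt_mul hlam.le]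
    apply Real.sqrt_le_sqrt
    calc lam * (lam * t) ≤ lam * (δ ⬝ᵥ δ) := by
          exact mul_le_mul_of_nonneg_left hkey hlam.le
end

section
/- Let p ≥ 1, 1 ≤ k < p, and let U₁ ∈ ℝ^{p×k} and U₂ ∈ ℝ^{p×(p−k)} have orthonormal columns with U₁ᵀU₂ = 0. Let φ_1, …, φ_n ∈ ℝ^p, ε_1, …, ε_n ∈ ℝ, β ∈ ℝ^p with β = U₁U₁ᵀβ, and δ_1, …, δ_n ∈ ℝ^p with δ_t = U₂U₂ᵀδ_t for each t. Set r_t := φ_tᵀ(β + δ_t) + ε_t, Σ̂ := Σ_{t=1}^n φ_t φ_tᵀ, and assume Σ̃ := U₁ᵀ Σ̂ U₁ is invertible. Define β̂ := U₁ Σ̃^{-1} Σ_{t=1}^n U₁ᵀ φ_t r_t. Then ‖β̂ − β‖_{Σ̂} ≤ ‖ Σ_{t=1}^n U₁ᵀ φ_t φ_tᵀ δ_t ‖_{Σ̃^{-1}} + ‖ Σ_{t=1}^n U₁ᵀ φ_t ε_t ‖_{Σ̃^{-1}}. -/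
open Matrix

private lemma sum_mulVec' {ι m n' : Type*} [Fintype m] [Fintype n'] (s : Finset ι)
    (M : ι → Matrix m n' ℝ) (x : n' → ℝ) :
    (∑ t ∈ s, M t) *ᵥ x = ∑ t ∈ s, M t *ᵥ x := by
  ext i
  simp only [Matrix.mulVec, dotProduct, Finset.sum_apply, Matrix.sum_apply, Finset.sum_mul]
  rw [Finset.sum_comm]

private lemma mulVec_sum' {ι m n' : Type*} [Fintype m] [Fintype n'] (s : Finset ι)
    (M : Matrix m n' ℝ) (v : ι → n' → ℝ) :
    M *ᵥ (∑ t ∈ s, v t) = ∑ t ∈ s, M *ᵥ v t := by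
  ext i
  simp only [Matrix.mulVec, dotProduct, Finset.sum_apply, Finset.mul_sum]
  rw [Finset.sum_comm]

private lemma dot_sum' {ι n' : Type*} [Fintype n'] (s : Finset ι) (x : n' → ℝ)
    (v : ι → n' → ℝ) : x ⬝ᵥ (∑ t ∈ s, v t) = ∑ t ∈ s, x ⬝ᵥ v t := by
  simp only [dotProduct, Finset.sum_apply, Finset.mul_sum]
  rw [Finset.sum_comm]

private lemma dot_mulVec_left {m n' : Type*} [Fintype m] [Fintype n']
    (M : Matrix m n' ℝ) (x : n' → ℝ) (z : m → ℝ) :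
    (M *ᵥ x) ⬝ᵥ z = x ⬝ᵥ (Mᵀ *ᵥ z) := by
  rw [Matrix.dotProduct_mulVec, Matrix.vecMul_transpose, dotProduct_comm]

open scoped MatrixOrder in
lemma wnorm_rep {k : ℕ} {A : Matrix (Fin k) (Fin k) ℝ} (hA : A.PosSemidef)
    (z : Fin k → ℝ) :
    wnorm A z = ‖(WithLp.equiv 2 (Fin k → ℝ)).symm ((CFC.sqrt A).mulVec z)‖ := by
  have hsym : (CFC.sqrt A)ᵀ = CFC.sqrt A := by
    have := (Matrix.nonneg_iff_posSemidef.mp (CFC.sqrt_nonneg A)).isHermitian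
    simpa [Matrix.IsHermitian] using this
  have h1 : z ⬝ᵥ A.mulVec z = ((CFC.sqrt A).mulVec z) ⬝ᵥ ((CFC.sqrt A).mulVec z) := by
    conv_lhs => rw [← CFC.sqrt_mul_sqrt_self A (Matrix.nonneg_iff_posSemidef.mpr hA)]
    rw [← Matrix.mulVec_mulVec, dot_mulVec_left, hsym]
  rw [wnorm, h1, EuclideanSpace.norm_eq]
  congr 1
  simp [dotProduct, Real.norm_eq_abs, sq_abs, pow_two]

lemma wnorm_add_le {k : ℕ} {A : Matrix (Fin k) (Fin k) ℝ} (hA : A.PosSemidef)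
    (x y : Fin k → ℝ) : wnorm A (x + y) ≤ wnorm A x + wnorm A y := by
  rw [wnorm_rep hA, wnorm_rep hA, wnorm_rep hA, Matrix.mulVec_add]
  rw [WithLp.equiv_symm_apply, WithLp.toLp_add]
  exact norm_add_le _ _

/-- invariant-component error decomposition, known subspaces.
With `β` in the column span of `U₁`, `δ_t` in the column span of `U₂`,
`r_t = φ_tᵀ(β + δ_t) + ε_t`, `Σ̂ = ∑ φ_t φ_tᵀ`, `Σ̃ = U₁ᵀ Σ̂ U₁` invertible, and
`β̂ = U₁ Σ̃⁻¹ ∑ U₁ᵀ φ_t r_t`, one has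
`‖β̂ − β‖_{Σ̂} ≤ ‖∑ U₁ᵀ φ_t φ_tᵀ δ_t‖_{Σ̃⁻¹} + ‖∑ U₁ᵀ φ_t ε_t‖_{Σ̃⁻¹}`. -/
theorem stmt8 {p k n : ℕ} (hp : 1 ≤ p) (hk1 : 1 ≤ k) (hkp : k < p)
    (U₁ : Matrix (Fin p) (Fin k) ℝ) (U₂ : Matrix (Fin p) (Fin (p - k)) ℝ)
    (hU₁ : U₁ᵀ * U₁ = 1) (hU₂ : U₂ᵀ * U₂ = 1) (hU₁₂ : U₁ᵀ * U₂ = 0)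
    (φ : Fin n → Fin p → ℝ) (ε : Fin n → ℝ)
    (β : Fin p → ℝ) (hβ : β = (U₁ * U₁ᵀ).mulVec β)
    (δ : Fin n → Fin p → ℝ) (hδ : ∀ t, δ t = (U₂ * U₂ᵀ).mulVec (δ t))
    (r : Fin n → ℝ) (hr : ∀ t, r t = φ t ⬝ᵥ (β + δ t) + ε t)
    (Shat : Matrix (Fin p) (Fin p) ℝ) (hShat : Shat = ∑ t, vecMulVec (φ t) (φ t))
    (Stil : Matrix (Fin k) (Fin k) ℝ) (hStil : Stil = U₁ᵀ * Shat * U₁)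
    (hinv : IsUnit Stil)
    (βhat : Fin p → ℝ)
    (hβhat : βhat = U₁.mulVec (Stil⁻¹.mulVec (∑ t, r t • U₁ᵀ.mulVec (φ t)))) :
    wnorm Shat (βhat - β)
      ≤ wnorm Stil⁻¹ (∑ t, (φ t ⬝ᵥ δ t) • U₁ᵀ.mulVec (φ t))
        + wnorm Stil⁻¹ (∑ t, ε t • U₁ᵀ.mulVec (φ t)) := by
  classical
  have hdet : IsUnit Stil.det := (Matrix.isUnit_iff_isUnit_det Stil).mp hinv
  have hShatT : Shatᵀ = Shat := by
    rw [hShat]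
    simp only [Matrix.transpose_sum]
    refine Finset.sum_congr rfl fun t _ => ?_
    ext i j; simp [Matrix.vecMulVec_apply, mul_comm]
  have hStilT : Stilᵀ = Stil := by
    rw [hStil]; simp [Matrix.transpose_mul, hShatT, Matrix.mul_assoc]
  have hinvT : (Stil⁻¹)ᵀ = Stil⁻¹ := by
    rw [Matrix.transpose_nonsing_inv, hStilT]
  have hShatPSD : Shat.PosSemidef := by
    refine Matrix.PosSemidef.of_dotProduct_mulVec_nonneg ?_ ?_
    · simpa [Matrix.IsHermitian] using hShatT
    · intro x
      rw [hShat, sum_mulVec', dot_sum']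
      refine Finset.sum_nonneg fun t _ => ?_
      have : star x ⬝ᵥ (vecMulVec (φ t) (φ t)).mulVec x = (φ t ⬝ᵥ x) * (φ t ⬝ᵥ x) := by
        simp [dotProduct, Matrix.mulVec, Matrix.vecMulVec_apply, Finset.mul_sum,
          Finset.sum_mul, mul_assoc, mul_comm, mul_left_comm]
      rw [this]
      exact mul_self_nonneg _
  have hStilPSD : Stil.PosSemidef := by
    rw [hStil]
    have := hShatPSD.conjTranspose_mul_mul_same U₁
    simpa using this
  have hinvPSD : Stil⁻¹.PosSemidef := by
    have h := hStilPSD.conjTranspose_mul_mul_same Stil⁻¹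
    have hH : (Stil⁻¹)ᴴ = Stil⁻¹ := by
      rw [Matrix.conjTranspose_eq_transpose_of_trivial]; exact hinvT
    rw [hH, Matrix.mul_assoc, Matrix.mul_nonsing_inv _ hdet, Matrix.mul_one] at h
    exact h
  set a : Fin n → Fin k → ℝ := fun t => U₁ᵀ.mulVec (φ t) with ha
  set vδ : Fin k → ℝ := ∑ t, (φ t ⬝ᵥ δ t) • a t with hvδ
  set vε : Fin k → ℝ := ∑ t, ε t • a t with hvε
  set v : Fin k → ℝ := vδ + vε with hv
  set c : Fin k → ℝ := U₁ᵀ.mulVec β with hc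
  have hβc : U₁.mulVec c = β := by
    rw [hc, Matrix.mulVec_mulVec, ← hβ]
  have hsum : (∑ t, r t • a t) = Stil.mulVec c + v := by
    have hterm : ∀ t, r t • a t
        = (φ t ⬝ᵥ β) • a t + ((φ t ⬝ᵥ δ t) • a t + ε t • a t) := by
      intro t
      rw [hr t, dotProduct_add]
      module
    have hfirst : (∑ t, (φ t ⬝ᵥ β) • a t) = Stil.mulVec c := by
      have h2 : Stil.mulVec c = U₁ᵀ.mulVec (Shat.mulVec β) := by
        have hb2 : U₁ *ᵥ (U₁ᵀ *ᵥ β) = β := by rw [Matrix.mulVec_mulVec, ← hβ]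
        rw [hStil, hc, ← Matrix.mulVec_mulVec, hb2, ← Matrix.mulVec_mulVec]
      rw [h2, hShat, sum_mulVec', mulVec_sum']
      refine (Finset.sum_congr rfl fun t _ => ?_).symm
      have h3 : (vecMulVec (φ t) (φ t)).mulVec β = (φ t ⬝ᵥ β) • φ t := by
        ext i
        simp only [Matrix.mulVec, Matrix.vecMulVec_apply, dotProduct,
          Pi.smul_apply, smul_eq_mul, Finset.sum_mul]
        apply Finset.sum_congr rfl
        intro j _
        ring
      rw [h3]
      ext i
      simp only [Matrix.mulVec, dotProduct, Pi.smul_apply, smul_eq_mul, ha,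
        Finset.mul_sum]
      apply Finset.sum_congr rfl
      intro j _
      ring
    rw [Finset.sum_congr rfl fun t _ => hterm t, Finset.sum_add_distrib,
      Finset.sum_add_distrib, hfirst]
  have hdiff : βhat - β = U₁.mulVec (Stil⁻¹.mulVec v) := by
    rw [hβhat, hsum, Matrix.mulVec_add, Matrix.mulVec_mulVec,
      Matrix.nonsing_inv_mul _ hdet, Matrix.one_mulVec, Matrix.mulVec_add, hβc]
    abel
  have hwe : wnorm Shat (βhat - β) = wnorm Stil⁻¹ v := by
    rw [hdiff, wnorm, wnorm]
    congr 1
    set w : Fin k → ℝ := Stil⁻¹.mulVec v with hw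
    have h1 : (U₁.mulVec w) ⬝ᵥ Shat.mulVec (U₁.mulVec w) = w ⬝ᵥ Stil.mulVec w := by
      rw [dot_mulVec_left]
      congr 1
      rw [Matrix.mulVec_mulVec, Matrix.mulVec_mulVec, hStil, Matrix.mul_assoc]
    have h2 : Stil.mulVec w = v := by
      rw [hw, Matrix.mulVec_mulVec, Matrix.mul_nonsing_inv _ hdet, Matrix.one_mulVec]
    rw [h1, h2, hw, dot_mulVec_left, hinvT]
  rw [hwe, hv]
  exact wnorm_add_le hinvPSD vδ vε
end

section
/- Let p ≥ 1, 1 ≤ k ≤ p, λ ≥ 0, and let x_1, …, x_n ∈ ℝ^p satisfy ‖x_i‖₂ ≤ L for all i. Let Û ∈ ℝ^{p×k} have orthonormal columns, let v ∈ ℝ^p, and assume S := λ I_k + Σ_{i=1}^n Ûᵀ x_i x_iᵀ Û is invertible. Then ‖ Σ_{i=1}^n Ûᵀ x_i (x_iᵀ v) ‖_{S^{-1}} ≤ L ‖v‖₂ √(k n). -/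
open Matrix

lemma psd_nonneg' {m : ℕ} {M : Matrix (Fin m) (Fin m) ℝ} (hM : M.PosSemidef)
    (z : Fin m → ℝ) : 0 ≤ z ⬝ᵥ M.mulVec z := by simpa using hM.dotProduct_mulVec_nonneg z

lemma dot_symm' {m : ℕ} {M : Matrix (Fin m) (Fin m) ℝ} (hM : M.PosSemidef)
    (a b : Fin m → ℝ) : a ⬝ᵥ M.mulVec b = b ⬝ᵥ M.mulVec a := by
  have h : Mᵀ = M := by
    have := hM.1
    rwa [Matrix.IsHermitian, conjTranspose_eq_transpose_of_trivial] at this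
  rw [dotProduct_mulVec, ← mulVec_transpose, h, dotProduct_comm]

lemma psd_cs' {m : ℕ} {M : Matrix (Fin m) (Fin m) ℝ} (hM : M.PosSemidef)
    (a b : Fin m → ℝ) :
    (a ⬝ᵥ M.mulVec b) ^ 2 ≤ (a ⬝ᵥ M.mulVec a) * (b ⬝ᵥ M.mulVec b) := by
  have key : ∀ t : ℝ, 0 ≤ (b ⬝ᵥ M.mulVec b) * (t * t)
      + (2 * (a ⬝ᵥ M.mulVec b)) * t + (a ⬝ᵥ M.mulVec a) := by
    intro t
    have h0 : 0 ≤ (a + t • b) ⬝ᵥ M.mulVec (a + t • b) := psd_nonneg' hM _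
    have e1 : (a + t • b) ⬝ᵥ M.mulVec (a + t • b)
        = a ⬝ᵥ M.mulVec a + t * (a ⬝ᵥ M.mulVec b) + t * (b ⬝ᵥ M.mulVec a)
          + t * t * (b ⬝ᵥ M.mulVec b) := by
      simp [mulVec_add, mulVec_smul, add_dotProduct, dotProduct_add,
        smul_dotProduct, dotProduct_smul]
      ring
    rw [e1, dot_symm' hM b a] at h0
    nlinarith [h0]
  have hd := discrim_le_zero key
  rw [discrim] at hd
  nlinarith [hd]

lemma vecMulVec_psd' {m : ℕ} (u : Fin m → ℝ) : (vecMulVec u u).PosSemidef := by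
  refine posSemidef_iff_dotProduct_mulVec.mpr ⟨?_, ?_⟩
  · ext i j
    simp [vecMulVec_apply, mul_comm]
  · intro y
    have h : (vecMulVec u u).mulVec y = (u ⬝ᵥ y) • u := by
      ext i
      simp only [mulVec, vecMulVec_apply, dotProduct, Pi.smul_apply, smul_eq_mul,
        Finset.sum_mul]
      exact Finset.sum_congr rfl fun _ _ => by ring
    have h2 : star y ⬝ᵥ (vecMulVec u u).mulVec y = (u ⬝ᵥ y) * (u ⬝ᵥ y) := by
      rw [h]
      simp [dotProduct_smul, dotProduct_comm y u]
    rw [h2]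
    exact mul_self_nonneg _

lemma trace_mul_vecMulVec' {m : ℕ} (M : Matrix (Fin m) (Fin m) ℝ) (w : Fin m → ℝ) :
    trace (M * vecMulVec w w) = w ⬝ᵥ M.mulVec w := by
  simp only [trace, diag_apply, mul_apply, vecMulVec_apply, dotProduct, mulVec,
    Finset.mul_sum]
  exact Finset.sum_congr rfl fun j _ => Finset.sum_congr rfl fun l _ => by ring

lemma trace_nonneg' {m : ℕ} {M : Matrix (Fin m) (Fin m) ℝ} (hM : M.PosSemidef) :
    0 ≤ trace M := by
  apply Finset.sum_nonneg
  intro j _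
  have := hM.dotProduct_mulVec_nonneg (Pi.single j 1)
  simpa [dotProduct, mulVec, Pi.single_apply] using this

lemma sum_smul_dotProduct' {n k : ℕ} (a : Fin n → ℝ) (u : Fin n → Fin k → ℝ)
    (w : Fin k → ℝ) :
    (∑ i, a i • u i) ⬝ᵥ w = ∑ i, a i * (u i ⬝ᵥ w) := by
  simp only [dotProduct, Finset.sum_apply, Pi.smul_apply, smul_eq_mul,
    Finset.sum_mul, Finset.mul_sum]
  rw [Finset.sum_comm]
  simp [mul_assoc]

lemma key_lemma' {k n : ℕ} {M : Matrix (Fin k) (Fin k) ℝ} (hM : M.PosSemidef)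
    (u : Fin n → Fin k → ℝ) (a : Fin n → ℝ) (C D : ℝ) (hC0 : 0 ≤ C) (hD0 : 0 ≤ D)
    (hC : ∀ i, a i ^ 2 ≤ C) (hD : ∑ i, u i ⬝ᵥ M.mulVec (u i) ≤ D) :
    Real.sqrt ((∑ i, a i • u i) ⬝ᵥ M.mulVec (∑ i, a i • u i))
      ≤ Real.sqrt ((n : ℝ) * C) * Real.sqrt D := by
  set z : Fin k → ℝ := ∑ i, a i • u i with hz
  set Q : ℝ := z ⬝ᵥ M.mulVec z with hQ
  have hQ0 : 0 ≤ Q := psd_nonneg' hM z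
  set T : ℝ := ∑ i, |a i| * Real.sqrt (u i ⬝ᵥ M.mulVec (u i)) with hT
  have hT0 : 0 ≤ T :=
    Finset.sum_nonneg fun i _ => mul_nonneg (abs_nonneg _) (Real.sqrt_nonneg _)
  have h1 : Q ≤ T * Real.sqrt Q := by
    have e1 : Q = ∑ i, a i * (u i ⬝ᵥ M.mulVec z) := by
      rw [hQ]; exact sum_smul_dotProduct' a u (M.mulVec z)
    have step : ∀ i : Fin n, a i * (u i ⬝ᵥ M.mulVec z)
        ≤ |a i| * Real.sqrt (u i ⬝ᵥ M.mulVec (u i)) * Real.sqrt Q := by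
      intro i
      have hcs := psd_cs' hM (u i) z
      have huu : 0 ≤ u i ⬝ᵥ M.mulVec (u i) := psd_nonneg' hM _
      have habs : |u i ⬝ᵥ M.mulVec z|
          ≤ Real.sqrt (u i ⬝ᵥ M.mulVec (u i)) * Real.sqrt Q := by
        rw [← Real.sqrt_sq_eq_abs, ← Real.sqrt_mul huu]
        exact Real.sqrt_le_sqrt hcs
      calc a i * (u i ⬝ᵥ M.mulVec z) ≤ |a i * (u i ⬝ᵥ M.mulVec z)| := le_abs_self _
        _ = |a i| * |u i ⬝ᵥ M.mulVec z| := abs_mul _ _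
        _ ≤ |a i| * (Real.sqrt (u i ⬝ᵥ M.mulVec (u i)) * Real.sqrt Q) :=
            mul_le_mul_of_nonneg_left habs (abs_nonneg _)
        _ = |a i| * Real.sqrt (u i ⬝ᵥ M.mulVec (u i)) * Real.sqrt Q := by ring
    calc Q = ∑ i, a i * (u i ⬝ᵥ M.mulVec z) := e1
      _ ≤ ∑ i, |a i| * Real.sqrt (u i ⬝ᵥ M.mulVec (u i)) * Real.sqrt Q :=
          Finset.sum_le_sum fun i _ => step i
      _ = T * Real.sqrt Q := by rw [hT, Finset.sum_mul]
  have h2 : Real.sqrt Q ≤ T := by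
    rcases eq_or_lt_of_le (Real.sqrt_nonneg Q) with h | h
    · rw [← h]; exact hT0
    · have h3 : Real.sqrt Q * Real.sqrt Q ≤ T * Real.sqrt Q := by
        rw [Real.mul_self_sqrt hQ0]; exact h1
      exact le_of_mul_le_mul_right h3 h
  have h3 : T ≤ Real.sqrt (∑ i, a i ^ 2) * Real.sqrt (∑ i, u i ⬝ᵥ M.mulVec (u i)) := by
    have hcs := Finset.sum_mul_sq_le_sq_mul_sq Finset.univ (fun i => |a i|)
      (fun i => Real.sqrt (u i ⬝ᵥ M.mulVec (u i)))
    have e2 : ∀ i : Fin n, |a i| ^ 2 = a i ^ 2 := fun i => sq_abs _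
    have e3 : ∀ i : Fin n, Real.sqrt (u i ⬝ᵥ M.mulVec (u i)) ^ 2
        = u i ⬝ᵥ M.mulVec (u i) := fun i => Real.sq_sqrt (psd_nonneg' hM _)
    simp only [e2, e3] at hcs
    have hsq : T ^ 2 ≤ (∑ i, a i ^ 2) * ∑ i, u i ⬝ᵥ M.mulVec (u i) := hcs
    calc T = Real.sqrt (T ^ 2) := (Real.sqrt_sq hT0).symm
      _ ≤ Real.sqrt ((∑ i, a i ^ 2) * ∑ i, u i ⬝ᵥ M.mulVec (u i)) :=
          Real.sqrt_le_sqrt hsq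
      _ = _ := Real.sqrt_mul (Finset.sum_nonneg fun i _ => sq_nonneg _) _
  have h4 : ∑ i, a i ^ 2 ≤ (n : ℝ) * C := by
    calc ∑ i, a i ^ 2 ≤ ∑ _i : Fin n, C := Finset.sum_le_sum fun i _ => hC i
      _ = (n : ℝ) * C := by simp [Finset.sum_const, nsmul_eq_mul]
  calc Real.sqrt Q ≤ T := h2
    _ ≤ Real.sqrt (∑ i, a i ^ 2) * Real.sqrt (∑ i, u i ⬝ᵥ M.mulVec (u i)) := h3
    _ ≤ Real.sqrt ((n : ℝ) * C) * Real.sqrt D :=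
        mul_le_mul (Real.sqrt_le_sqrt h4) (Real.sqrt_le_sqrt hD)
          (Real.sqrt_nonneg _) (Real.sqrt_nonneg _)

/-- Cauchy–Schwarz design bound.
If `‖x_i‖₂ ≤ L`, `Û` has orthonormal columns, and
`S = λ I_k + ∑ Ûᵀ x_i x_iᵀ Û` is invertible, then
`‖∑ Ûᵀ x_i (x_iᵀ v)‖_{S⁻¹} ≤ L ‖v‖₂ √(k n)`. -/
theorem stmt12 {p k n : ℕ} (hp : 1 ≤ p) (hk1 : 1 ≤ k) (hkp : k ≤ p)
    (lam : ℝ) (hlam : 0 ≤ lam) (L : ℝ)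
    (x : Fin n → Fin p → ℝ) (hx : ∀ i, Real.sqrt (x i ⬝ᵥ x i) ≤ L)
    (U : Matrix (Fin p) (Fin k) ℝ) (hU : Uᵀ * U = 1)
    (v : Fin p → ℝ)
    (S : Matrix (Fin k) (Fin k) ℝ)
    (hS : S = lam • (1 : Matrix (Fin k) (Fin k) ℝ)
        + ∑ i, vecMulVec (Uᵀ.mulVec (x i)) (Uᵀ.mulVec (x i)))
    (hinv : IsUnit S) :
    wnorm S⁻¹ (∑ i, (x i ⬝ᵥ v) • Uᵀ.mulVec (x i))
      ≤ L * Real.sqrt (v ⬝ᵥ v) * Real.sqrt (k * n) := by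
  rcases Nat.eq_zero_or_pos n with hn | hn
  · subst hn
    simp [wnorm]
  have hL : 0 ≤ L := le_trans (Real.sqrt_nonneg _) (hx ⟨0, hn⟩)
  have hvv : 0 ≤ v ⬝ᵥ v := Finset.sum_nonneg fun i _ => mul_self_nonneg _
  -- S is positive semidefinite
  have hSpsd : S.PosSemidef := by
    rw [hS]
    apply PosSemidef.add
    · have e : lam • (1 : Matrix (Fin k) (Fin k) ℝ) = diagonal (fun _ => lam) := by
        ext i j
        by_cases h : i = j <;> simp [h, Matrix.one_apply, diagonal]
      rw [e]
      exact PosSemidef.diagonal fun _ => hlam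
    · exact Finset.sum_induction _ Matrix.PosSemidef
        (fun A B hA hB => hA.add hB) Matrix.PosSemidef.zero
        (fun i _ => vecMulVec_psd' _)
  have hMpsd : (S⁻¹).PosSemidef := hSpsd.inv
  -- bound ∑ (Uᵀ xᵢ)ᵀ S⁻¹ (Uᵀ xᵢ) ≤ k
  have hdet : IsUnit S.det := (Matrix.isUnit_iff_isUnit_det S).mp hinv
  have hMS : S⁻¹ * S = 1 := Matrix.nonsing_inv_mul S hdet
  have hD : ∑ i, (Uᵀ.mulVec (x i)) ⬝ᵥ (S⁻¹).mulVec (Uᵀ.mulVec (x i)) ≤ (k : ℝ) := by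
    have e1 : ∑ i, (Uᵀ.mulVec (x i)) ⬝ᵥ (S⁻¹).mulVec (Uᵀ.mulVec (x i))
        = trace (S⁻¹ * ∑ i, vecMulVec (Uᵀ.mulVec (x i)) (Uᵀ.mulVec (x i))) := by
      rw [Finset.mul_sum, trace_sum]
      exact (Finset.sum_congr rfl fun i _ => (trace_mul_vecMulVec' _ _)).symm
    have e2 : S⁻¹ * ∑ i, vecMulVec (Uᵀ.mulVec (x i)) (Uᵀ.mulVec (x i))
        = 1 - lam • S⁻¹ := by
      have h' : S⁻¹ * (lam • (1 : Matrix (Fin k) (Fin k) ℝ)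
          + ∑ i, vecMulVec (Uᵀ.mulVec (x i)) (Uᵀ.mulVec (x i))) = 1 := by
        rw [← hS]; exact hMS
      rw [Matrix.mul_add, Matrix.mul_smul, Matrix.mul_one] at h'
      exact eq_sub_of_add_eq' h'
    rw [e1, e2, trace_sub, trace_smul, trace_one]
    have htr := trace_nonneg' hMpsd
    have hcard : (Fintype.card (Fin k) : ℝ) = (k : ℝ) := by simp
    rw [hcard]
    have : 0 ≤ lam * trace S⁻¹ := mul_nonneg hlam htr
    simp only [smul_eq_mul]
    linarith
  -- bound each coefficient
  have hC : ∀ i, (x i ⬝ᵥ v) ^ 2 ≤ L ^ 2 * (v ⬝ᵥ v) := by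
    intro i
    have hcs := psd_cs' (Matrix.PosSemidef.one (n := Fin p) (R := ℝ)) (x i) v
    simp only [one_mulVec] at hcs
    have hxx : 0 ≤ x i ⬝ᵥ x i := Finset.sum_nonneg fun j _ => mul_self_nonneg _
    have hxL : x i ⬝ᵥ x i ≤ L ^ 2 := by
      have h := hx i
      nlinarith [Real.sq_sqrt hxx, Real.sqrt_nonneg (x i ⬝ᵥ x i)]
    nlinarith [hvv]
  have hkey := key_lemma' hMpsd (fun i => Uᵀ.mulVec (x i)) (fun i => x i ⬝ᵥ v)
    (L ^ 2 * (v ⬝ᵥ v)) (k : ℝ) (by positivity) (by positivity) hC hD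
  rw [wnorm]
  refine le_trans hkey (le_of_eq ?_)
  rw [show (n : ℝ) * (L ^ 2 * (v ⬝ᵥ v)) = (L ^ 2 * (v ⬝ᵥ v)) * (n : ℝ) by ring,
    Real.sqrt_mul (by positivity), Real.sqrt_mul (by positivity),
    Real.sqrt_sq hL]
  push_cast
  rw [show (k : ℝ) * (n : ℝ) = (n : ℝ) * (k : ℝ) from mul_comm _ _,
    Real.sqrt_mul (Nat.cast_nonneg n)]
  ring
end

section
/- Let p ≥ 1, 1 ≤ k < p, and let constants L, M, c, Δ > 0. Let Û₁ ∈ ℝ^{p×k} and U₂ ∈ ℝ^{p×(p−k)} have orthonormal columns with ‖Û₁ᵀU₂‖_op ≤ Δ. Let φ_1, …, φ_n ∈ ℝ^p with ‖φ_t‖₂ ≤ L for all t, and let δ ∈ ℝ^p with ‖δ‖₂ ≤ M. Assume S := Û₁ᵀ ( Σ_{t=1}^n φ_t φ_tᵀ ) Û₁ satisfies S − c n I_k positive semidefinite. Then ‖ Σ_{t=1}^n Û₁ᵀ U₂U₂ᵀ φ_t φ_tᵀ U₂U₂ᵀ δ ‖_{S^{-1}} ≤ √(n/c) · Δ · L²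 M. -/
open Matrix

/-- The operator norm of a (possibly rectangular) real matrix, induced by the
Euclidean norms on its domain and codomain. -/
noncomputable def opNorm {m n : Type*} [Fintype m] [Fintype n] [DecidableEq n]
    (A : Matrix m n ℝ) : ℝ :=
  ‖LinearMap.toContinuousLinearMap (Matrix.toEuclideanLin A)‖

noncomputable def ev {m : Type*} [Fintype m] (x : m → ℝ) : EuclideanSpace ℝ m :=
  (WithLp.equiv 2 _).symm x

lemma e_eq {m : Type*} [Fintype m] (x : m → ℝ) : Real.sqrt (x ⬝ᵥ x) = ‖ev x‖ := by
  rw [EuclideanSpace.norm_eq]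
  congr 1
  simp [dotProduct, ev, Real.norm_eq_abs, sq_abs, sq]

lemma dot_eq_inner {m : Type*} [Fintype m] (x y : m → ℝ) :
    x ⬝ᵥ y = inner ℝ (ev x) (ev y) := by
  simp [PiLp.inner_apply, dotProduct, ev, mul_comm]

lemma dot_sq {m : Type*} [Fintype m] (x : m → ℝ) : x ⬝ᵥ x = ‖ev x‖ ^ 2 := by
  rw [dot_eq_inner, real_inner_self_eq_norm_sq]

lemma abs_dot_le {m : Type*} [Fintype m] (x y : m → ℝ) :
    |x ⬝ᵥ y| ≤ ‖ev x‖ * ‖ev y‖ := by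
  rw [dot_eq_inner]; exact abs_real_inner_le_norm _ _

lemma mulVec_norm_le {a b : ℕ} (A : Matrix (Fin a) (Fin b) ℝ) (x : Fin b → ℝ) :
    ‖ev (A *ᵥ x)‖ ≤ opNorm A * ‖ev x‖ := by
  have h := (LinearMap.toContinuousLinearMap (Matrix.toEuclideanLin A)).le_opNorm (ev x)
  simpa [opNorm, ev, Matrix.toEuclideanLin_apply_piLp_toLp] using h

/-- quadratic form bound for the inverse -/
lemma inv_quad_le {k : ℕ} (S : Matrix (Fin k) (Fin k) ℝ) (hS : S.PosDef) (a : ℝ) (ha : 0 < a)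
    (hlow : ∀ y, a * (y ⬝ᵥ y) ≤ y ⬝ᵥ S *ᵥ y) (x : Fin k → ℝ) :
    x ⬝ᵥ S⁻¹ *ᵥ x ≤ (x ⬝ᵥ x) / a := by
  set z : Fin k → ℝ := S⁻¹ *ᵥ x with hzdef
  have hz : S *ᵥ z = x := by
    rw [hzdef, mulVec_mulVec, Matrix.mul_nonsing_inv _ hS.det_pos.ne'.isUnit, one_mulVec]
  have hq0 : 0 ≤ x ⬝ᵥ z := by
    have := hS.inv.posSemidef.dotProduct_mulVec_nonneg x
    simpa [hzdef] using this
  have h1 : a * (z ⬝ᵥ z) ≤ x ⬝ᵥ z := by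
    have h := hlow z
    rw [hz, dotProduct_comm z x] at h
    exact h
  have h2 : x ⬝ᵥ z ≤ ‖ev x‖ * ‖ev z‖ := (le_abs_self _).trans (abs_dot_le x z)
  have hx2 : x ⬝ᵥ x = ‖ev x‖ ^ 2 := dot_sq x
  have hz2 : z ⬝ᵥ z = ‖ev z‖ ^ 2 := dot_sq z
  rcases eq_or_lt_of_le hq0 with h0 | hq
  · rw [← h0]
    have hxx : 0 ≤ x ⬝ᵥ x := by rw [dot_sq]; positivity
    exact div_nonneg hxx ha.le
  · rw [le_div_iff₀ ha]
    have hxx : 0 ≤ x ⬝ᵥ x := by rw [dot_sq]; positivity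
    have s1 : (x ⬝ᵥ z) * (x ⬝ᵥ z) ≤ (x ⬝ᵥ x) * (z ⬝ᵥ z) := by
      rw [hx2, hz2]
      calc (x ⬝ᵥ z) * (x ⬝ᵥ z) ≤ (‖ev x‖ * ‖ev z‖) * (‖ev x‖ * ‖ev z‖) :=
            mul_self_le_mul_self hq.le h2
        _ = ‖ev x‖ ^ 2 * ‖ev z‖ ^ 2 := by ring
    have s2 : a * ((x ⬝ᵥ z) * (x ⬝ᵥ z)) ≤ (x ⬝ᵥ x) * (a * (z ⬝ᵥ z)) := by
      calc a * ((x ⬝ᵥ z) * (x ⬝ᵥ z)) ≤ a * ((x ⬝ᵥ x) * (z ⬝ᵥ z)) :=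
            mul_le_mul_of_nonneg_left s1 ha.le
        _ = (x ⬝ᵥ x) * (a * (z ⬝ᵥ z)) := by ring
    have s3 : (x ⬝ᵥ x) * (a * (z ⬝ᵥ z)) ≤ (x ⬝ᵥ x) * (x ⬝ᵥ z) :=
      mul_le_mul_of_nonneg_left h1 hxx
    exact le_of_mul_le_mul_right (by linarith) hq

/-- cross-subspace leakage bound.
With `‖Û₁ᵀ U₂‖_op ≤ Δ`, `‖φ_t‖₂ ≤ L`, `‖δ‖₂ ≤ M`, and
`S = Û₁ᵀ (∑ φ_t φ_tᵀ) Û₁ ⪰ c n I_k`, one has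
`‖∑ Û₁ᵀ U₂U₂ᵀ φ_t φ_tᵀ U₂U₂ᵀ δ‖_{S⁻¹} ≤ √(n/c) Δ L² M`. -/
theorem stmt19 {p k n : ℕ} (hp : 1 ≤ p) (hk1 : 1 ≤ k) (hkp : k < p)
    (L M c Δ : ℝ) (hL : 0 < L) (hM : 0 < M) (hc : 0 < c) (hΔ : 0 < Δ)
    (Uhat₁ : Matrix (Fin p) (Fin k) ℝ) (U₂ : Matrix (Fin p) (Fin (p - k)) ℝ)
    (hUhat₁ : Uhat₁ᵀ * Uhat₁ = 1) (hU₂ : U₂ᵀ * U₂ = 1)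
    (hcross : opNorm (Uhat₁ᵀ * U₂) ≤ Δ)
    (φ : Fin n → Fin p → ℝ) (hφ : ∀ t, Real.sqrt (φ t ⬝ᵥ φ t) ≤ L)
    (δ : Fin p → ℝ) (hδ : Real.sqrt (δ ⬝ᵥ δ) ≤ M)
    (S : Matrix (Fin k) (Fin k) ℝ)
    (hS : S = Uhat₁ᵀ * (∑ t, vecMulVec (φ t) (φ t)) * Uhat₁)
    (hpsd : (S - (c * n) • (1 : Matrix (Fin k) (Fin k) ℝ)).PosSemidef) :
    wnorm S⁻¹
        (∑ t, (φ t ⬝ᵥ ((U₂ * U₂ᵀ).mulVec δ))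
          • Uhat₁ᵀ.mulVec ((U₂ * U₂ᵀ).mulVec (φ t)))
      ≤ Real.sqrt (n / c) * Δ * L ^ 2 * M := by
  have hRHS0 : 0 ≤ Real.sqrt (n / c) * Δ * L ^ 2 * M := by positivity
  set P : Matrix (Fin p) (Fin p) ℝ := U₂ * U₂ᵀ with hPdef
  set x : Fin k → ℝ := ∑ t, (φ t ⬝ᵥ P *ᵥ δ) • Uhat₁ᵀ *ᵥ (P *ᵥ (φ t)) with hxdef
  -- basic projection facts
  have hPsymm : Pᵀ = P := by rw [hPdef, transpose_mul, transpose_transpose]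
  have hPP : P * P = P := by
    rw [hPdef, Matrix.mul_assoc, ← Matrix.mul_assoc U₂ᵀ, hU₂, Matrix.one_mul]
  have hPv : ∀ v : Fin p → ℝ, P *ᵥ v = v ᵥ* P := by
    intro v
    rw [← mulVec_transpose, hPsymm]
  have hPnorm : ∀ v : Fin p → ℝ, ‖ev (P *ᵥ v)‖ ≤ ‖ev v‖ := by
    intro v
    have hdot : (P *ᵥ v) ⬝ᵥ (P *ᵥ v) = v ⬝ᵥ (P *ᵥ v) := by
      nth_rewrite 1 [hPv v]
      rw [← dotProduct_mulVec, mulVec_mulVec, hPP]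
    have h2 : ‖ev (P *ᵥ v)‖ ^ 2 ≤ ‖ev v‖ * ‖ev (P *ᵥ v)‖ := by
      rw [← dot_sq, hdot]
      exact (le_abs_self _).trans (abs_dot_le _ _)
    rcases eq_or_lt_of_le (norm_nonneg (ev (P *ᵥ v))) with h0 | h0
    · rw [← h0]; exact norm_nonneg _
    · rw [pow_two] at h2
      exact le_of_mul_le_mul_right (by linarith) h0
  have hU₂Tnorm : ∀ v : Fin p → ℝ, ‖ev (U₂ᵀ *ᵥ v)‖ ≤ ‖ev v‖ := by
    intro v
    have hdot : (U₂ᵀ *ᵥ v) ⬝ᵥ (U₂ᵀ *ᵥ v) = (P *ᵥ v) ⬝ᵥ (P *ᵥ v) := by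
      nth_rewrite 1 [mulVec_transpose]
      rw [← dotProduct_mulVec, mulVec_mulVec, ← hPdef]
      nth_rewrite 2 [hPv v]
      rw [← dotProduct_mulVec, mulVec_mulVec, hPP]
    have h2 : ‖ev (U₂ᵀ *ᵥ v)‖ ^ 2 ≤ ‖ev v‖ ^ 2 := by
      rw [← dot_sq, hdot, dot_sq]
      exact pow_le_pow_left₀ (norm_nonneg _) (hPnorm v) 2
    have := Real.sqrt_le_sqrt h2
    rwa [Real.sqrt_sq (norm_nonneg _), Real.sqrt_sq (norm_nonneg _)] at this
  -- bound on each term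
  have hterm : ∀ t, ‖ev ((φ t ⬝ᵥ P *ᵥ δ) • Uhat₁ᵀ *ᵥ (P *ᵥ (φ t)))‖ ≤ Δ * L ^ 2 * M := by
    intro t
    have hL' : ‖ev (φ t)‖ ≤ L := by rw [← e_eq]; exact hφ t
    have hM' : ‖ev (P *ᵥ δ)‖ ≤ M := (hPnorm δ).trans (by rw [← e_eq]; exact hδ)
    have hcoef : |φ t ⬝ᵥ P *ᵥ δ| ≤ L * M :=
      (abs_dot_le _ _).trans (mul_le_mul hL' hM' (norm_nonneg _) hL.le)
    have hvec : ‖ev (Uhat₁ᵀ *ᵥ (P *ᵥ (φ t)))‖ ≤ Δ * L := by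
      have : Uhat₁ᵀ *ᵥ (P *ᵥ (φ t)) = (Uhat₁ᵀ * U₂) *ᵥ (U₂ᵀ *ᵥ (φ t)) := by
        rw [hPdef, mulVec_mulVec, mulVec_mulVec, Matrix.mul_assoc]
      rw [this]
      calc ‖ev ((Uhat₁ᵀ * U₂) *ᵥ (U₂ᵀ *ᵥ (φ t)))‖
          ≤ opNorm (Uhat₁ᵀ * U₂) * ‖ev (U₂ᵀ *ᵥ (φ t))‖ := mulVec_norm_le _ _
        _ ≤ Δ * L := by
            apply mul_le_mul hcross ((hU₂Tnorm _).trans hL') (norm_nonneg _) hΔ.le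
    have hsm : ev ((φ t ⬝ᵥ P *ᵥ δ) • Uhat₁ᵀ *ᵥ (P *ᵥ (φ t)))
        = (φ t ⬝ᵥ P *ᵥ δ) • ev (Uhat₁ᵀ *ᵥ (P *ᵥ (φ t))) := rfl
    rw [hsm, norm_smul, Real.norm_eq_abs]
    calc |φ t ⬝ᵥ P *ᵥ δ| * ‖ev (Uhat₁ᵀ *ᵥ (P *ᵥ (φ t)))‖
        ≤ (L * M) * (Δ * L) := mul_le_mul hcoef hvec (norm_nonneg _) (by positivity)
      _ = Δ * L ^ 2 * M := by ring
  -- norm of the sum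
  have hxsum : ev x = ∑ t, ev ((φ t ⬝ᵥ P *ᵥ δ) • Uhat₁ᵀ *ᵥ (P *ᵥ (φ t))) :=
    map_sum (WithLp.linearEquiv 2 ℝ (Fin k → ℝ)).symm _ _
  have hxnorm : ‖ev x‖ ≤ n * (Δ * L ^ 2 * M) := by
    rw [hxsum]
    calc ‖∑ t, ev ((φ t ⬝ᵥ P *ᵥ δ) • Uhat₁ᵀ *ᵥ (P *ᵥ (φ t)))‖
        ≤ ∑ t : Fin n, ‖ev ((φ t ⬝ᵥ P *ᵥ δ) • Uhat₁ᵀ *ᵥ (P *ᵥ (φ t)))‖ := norm_sum_le _ _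
      _ ≤ ∑ _t : Fin n, Δ * L ^ 2 * M := Finset.sum_le_sum fun t _ => hterm t
      _ = n * (Δ * L ^ 2 * M) := by simp [mul_comm]
  rcases Nat.eq_zero_or_pos n with hn | hn
  · subst hn
    have : x = 0 := by simp [hxdef]
    rw [wnorm, this]
    simpa using hRHS0
  -- main case
  have hcn : 0 < c * n := by positivity
  have hlow : ∀ y : Fin k → ℝ, (c * n) * (y ⬝ᵥ y) ≤ y ⬝ᵥ S *ᵥ y := by
    intro y
    have h := hpsd.dotProduct_mulVec_nonneg y
    simp only [star_trivial, sub_mulVec, smul_mulVec, one_mulVec,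
      dotProduct_sub, dotProduct_smul, smul_eq_mul] at h
    linarith
  have hSpd : S.PosDef := by
    refine Matrix.PosDef.of_dotProduct_mulVec_pos ?_ (fun y hy => ?_)
    · have h1 := hpsd.1
      have h2 : ((c * n) • (1 : Matrix (Fin k) (Fin k) ℝ)).IsHermitian := by
        rw [Matrix.IsHermitian, conjTranspose_smul, conjTranspose_one]
        simp
      have := h1.add h2
      simpa using this
    · have hyy : 0 < y ⬝ᵥ y := by
        rcases lt_or_eq_of_le (show (0:ℝ) ≤ y ⬝ᵥ y by rw [dot_sq]; positivity) with h | h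
        · exact h
        · exact absurd (dotProduct_self_eq_zero.mp h.symm) hy
      simp only [star_trivial]
      exact (mul_pos hcn hyy).trans_le (hlow y)
  have hkey : x ⬝ᵥ S⁻¹ *ᵥ x ≤ (x ⬝ᵥ x) / (c * n) := inv_quad_le S hSpd _ hcn hlow x
  have hx2 : x ⬝ᵥ x ≤ (n * (Δ * L ^ 2 * M)) ^ 2 := by
    rw [dot_sq]
    exact pow_le_pow_left₀ (norm_nonneg _) hxnorm 2
  have hn' : (0:ℝ) < n := by exact_mod_cast hn
  rw [wnorm]
  have hfinal : x ⬝ᵥ S⁻¹ *ᵥ x ≤ (Real.sqrt (n / c) * Δ * L ^ 2 * M) ^ 2 := by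
    have hsq : Real.sqrt (n / c) ^ 2 = n / c := Real.sq_sqrt (by positivity)
    have : (Real.sqrt (n / c) * Δ * L ^ 2 * M) ^ 2 = (n / c) * (Δ * L ^ 2 * M) ^ 2 := by
      rw [show (Real.sqrt (n / c) * Δ * L ^ 2 * M) ^ 2
        = Real.sqrt (n / c) ^ 2 * (Δ * L ^ 2 * M) ^ 2 by ring, hsq]
    rw [this]
    calc x ⬝ᵥ S⁻¹ *ᵥ x ≤ (x ⬝ᵥ x) / (c * n) := hkey
      _ ≤ (n * (Δ * L ^ 2 * M)) ^ 2 / (c * n) := by gcongr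
      _ = (n / c) * (Δ * L ^ 2 * M) ^ 2 := by field_simp
  calc Real.sqrt (x ⬝ᵥ S⁻¹ *ᵥ x) ≤ Real.sqrt ((Real.sqrt (n / c) * Δ * L ^ 2 * M) ^ 2) :=
        Real.sqrt_le_sqrt hfinal
    _ = Real.sqrt (n / c) * Δ * L ^ 2 * M := Real.sqrt_sq hRHS0
end
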